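/- arXiv:1302.2129 — 2 statements merged into one kernel-verified Lean document; each statement's English description precedes it below -/
import Mathlib

section
/- Suppose a nonnegative sequence e(τ) satisfies e(τ+1) ≤ c·ε(τ)² + (1 - ε(τ))·e(τ) for all τ ≥ 0, where ε(τ) = 1/(1/δ + τ), δ ∈ (0, 1/2), and c ≥ 0. Then for all τ ≥ 1, e(τ) ≤ c·log(τ + 1/δ - 1)/(τ + 1/δ - 1) + e(0)·(1/δ - 1)/(τ + 1/δ - 1). -/
theorem stmt3 (δ c : ℝ) (hδ1 : 0 < δ) (hδ2 : δ < 1 / 2) (hc : 0 ≤ c)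
    (ε : ℕ → ℝ) (hε : ∀ t : ℕ, ε t = 1 / (1 / δ + t))
    (e : ℕ → ℝ) (he0 : ∀ t, 0 ≤ e t)
    (hrec : ∀ t : ℕ, e (t + 1) ≤ c * (ε t) ^ 2 + (1 - ε t) * e t) :
    ∀ τ : ℕ, 1 ≤ τ →
      e τ ≤ c * Real.log ((τ : ℝ) + 1 / δ - 1) / ((τ : ℝ) + 1 / δ - 1)
            + e 0 * (1 / δ - 1) / ((τ : ℝ) + 1 / δ - 1) := by
  have hD : (2:ℝ) < 1/δ := by
    rw [lt_div_iff₀ hδ1]; linarith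
  intro τ hτ
  induction τ, hτ using Nat.le_induction with
  | base =>
    have h0 := hrec 0
    rw [hε 0] at h0
    have hδne : δ ≠ 0 := ne_of_gt hδ1
    have hlog : 1 - δ ≤ Real.log (1/δ) := by
      have := Real.log_le_sub_one_of_pos hδ1
      rw [Real.log_div one_ne_zero hδne, Real.log_one]
      linarith
    have hlog2 : δ ≤ Real.log (1/δ) := by linarith
    have hε0 : (1:ℝ) / (1/δ + (0:ℕ)) = δ := by
      push_cast; field_simp; ring
    rw [hε0] at h0
    have hcast : ((1:ℕ):ℝ) + 1/δ - 1 = 1/δ := by push_cast; ring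
    rw [hcast]
    have key : c * δ^2 + (1 - δ) * e 0 ≤ c * Real.log (1/δ) / (1/δ) + e 0 * (1/δ - 1) / (1/δ) := by
      have h1 : c * Real.log (1/δ) / (1/δ) = c * δ * Real.log (1/δ) := by
        field_simp
      have h2 : e 0 * (1/δ - 1) / (1/δ) = e 0 * (1 - δ) := by
        field_simp
      rw [h1, h2]
      have : c * δ^2 ≤ c * δ * Real.log (1/δ) := by
        have hcδ : 0 ≤ c * δ := by positivity
        nlinarith
      linarith
    linarith
  | succ n hn ih =>
    set x : ℝ := (n:ℝ) + 1/δ - 1 with hxdef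
    have hn1 : (1:ℝ) ≤ (n:ℝ) := by exact_mod_cast hn
    have hx : 2 < x := by simp only [hxdef]; linarith
    have hx0 : 0 < x := by linarith
    have hx1 : 0 < x + 1 := by linarith
    have h0 := hrec n
    rw [hε n] at h0
    have hεn : (1:ℝ) / (1/δ + (n:ℝ)) = 1/(x+1) := by
      congr 1; simp only [hxdef]; ring
    rw [hεn] at h0
    have hcast : ((n+1:ℕ):ℝ) + 1/δ - 1 = x + 1 := by push_cast; ring
    rw [hcast]
    -- key log inequality : log x + 1/(x+1) ≤ log (x+1)
    have hlog : Real.log x + 1/(x+1) ≤ Real.log (x+1) := by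
      have h := Real.log_le_sub_one_of_pos (show 0 < x/(x+1) by positivity)
      rw [Real.log_div (ne_of_gt hx0) (ne_of_gt hx1)] at h
      have : x/(x+1) - 1 = -(1/(x+1)) := by field_simp; ring
      rw [this] at h
      linarith
    have hen : e n ≤ c * Real.log x / x + e 0 * (1/δ - 1) / x := ih
    have h1mε : 1 - 1/(x+1) = x/(x+1) := by field_simp; ring
    rw [h1mε] at h0
    have hcoef : (0:ℝ) ≤ x/(x+1) := by positivity
    have h2 : x/(x+1) * e n ≤ x/(x+1) * (c * Real.log x / x + e 0 * (1/δ - 1) / x) :=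
      mul_le_mul_of_nonneg_left hen hcoef
    have h3 : x/(x+1) * (c * Real.log x / x + e 0 * (1/δ - 1) / x)
        = c * Real.log x / (x+1) + e 0 * (1/δ - 1) / (x+1) := by
      field_simp
    rw [h3] at h2
    have h4 : c * (1/(x+1))^2 + c * Real.log x / (x+1) ≤ c * Real.log (x+1) / (x+1) := by
      have hc1 : 0 ≤ c * (Real.log (x+1) - (Real.log x + 1/(x+1))) :=
        mul_nonneg hc (by linarith)
      have heq : c * Real.log (x+1) / (x+1) - (c * (1/(x+1))^2 + c * Real.log x / (x+1))
          = c * (Real.log (x+1) - (Real.log x + 1/(x+1))) / (x+1) := by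
        field_simp; ring
      have hpos : 0 ≤ c * Real.log (x+1) / (x+1) - (c * (1/(x+1))^2 + c * Real.log x / (x+1)) := by
        rw [heq]; positivity
      linarith
    linarith
end

section
/- (Poincaré inequality for Markov chains, applied form) Let P be the transition matrix of an irreducible reversible Markov chain on n states with stationary distribution π, and suppose for each ordered pair (s,t) a path γ_{st} is chosen with weight |γ_{st}| = Σ_{edges (u,v) ∈ γ_{st}} 1/(π(u)P_{uv}). If κ = max over directed edges e of Σ_{γ_{st} ∋ e} |γ_{st}| π(s)π(t), then the second largest eigenvalue satisfies λ_{n-1}(P) ≤ 1 − 1/κ. -/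
open Matrix

/-- Weight `|γ|` of a path given by its vertex list: the sum over consecutive
edges `(u,v)` of `1/(π u * P u v)`. -/
noncomputable def pathWeight {n : ℕ} (P : Matrix (Fin n) (Fin n) ℝ)
    (π : Fin n → ℝ) (γ : List (Fin n)) : ℝ :=
  ((γ.zip γ.tail).map (fun e => 1 / (π e.1 * P e.1 e.2))).sum

section ListHelpers

variable {α : Type*}

private lemma tele' (v : α → ℝ) : ∀ (l : List α) (s t : α), l.head? = some s →
    l.getLast? = some t →
    ((l.zip l.tail).map (fun e => v e.2 - v e.1)).sum = v t - v s := by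
  intro l
  induction l with
  | nil => intro s t h; simp at h
  | cons a l ih =>
    intro s t hs ht
    cases l with
    | nil =>
      simp at hs ht; subst hs; subst ht; simp
    | cons b r =>
      have hs' : a = s := by simpa using hs
      have ht' : (b :: r).getLast? = some t := by
        rw [List.getLast?_cons_cons] at ht; exact ht
      have := ih b t rfl ht'
      simp only [List.tail_cons] at this
      subst hs'
      simp only [List.tail_cons, List.zip_cons_cons, List.map_cons, List.sum_cons]
      rw [this]; ring

private lemma zip_nodup' : ∀ (l : List α) (l' : List α), l.Nodup → (l.zip l').Nodup := by
  intro l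
  induction l with
  | nil => simp
  | cons a l ih =>
    intro l' h
    cases l' with
    | nil => simp
    | cons b r =>
      simp only [List.zip_cons_cons, List.nodup_cons] at *
      exact ⟨fun hm => h.1 (List.of_mem_zip hm).1, ih r h.2⟩

private lemma edges_sublist_cons' (a : α) (m : List α) :
    List.Sublist (m.zip m.tail) ((a::m).zip m) := by
  cases m with
  | nil => simp
  | cons b r => simp [List.zip_cons_cons]

private lemma edges_suffix' {l₁ l₂ : List α} (h : List.IsSuffix l₁ l₂) :
    List.Sublist (l₁.zip l₁.tail) (l₂.zip l₂.tail) := by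
  obtain ⟨u, rfl⟩ := h
  induction u with
  | nil => simp
  | cons a u ih =>
    refine ih.trans ?_
    simpa using edges_sublist_cons' a (u ++ l₁)

private lemma chain'_of_mem_zip' {R : α → α → Prop} : ∀ {l : List α}, l.Chain' R →
    ∀ {e : α × α}, e ∈ l.zip l.tail → R e.1 e.2 := by
  intro l
  induction l with
  | nil => simp
  | cons a m ih =>
    intro h e he
    cases m with
    | nil => simp at he
    | cons b r =>
      simp only [List.tail_cons, List.zip_cons_cons, List.mem_cons] at he
      rcases he with rfl | he
      · exact (List.isChain_cons_cons.mp h).1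
      · exact ih (List.isChain_cons_cons.mp h).2 he

private lemma getLast?_cons_ne' (a : α) {l : List α} (h : l ≠ []) :
    (a :: l).getLast? = l.getLast? := by
  obtain ⟨b, m, rfl⟩ := List.exists_cons_of_ne_nil h
  exact List.getLast?_cons_cons

variable [DecidableEq α]

private def eraseLoops' : List α → List α
  | [] => []
  | a :: l =>
    let r := eraseLoops' l
    if a ∈ r then r.dropWhile (· ≠ a) else a :: r

private lemma head?_dropWhile_ne' (a : α) : ∀ (l : List α), a ∈ l →
    (l.dropWhile (· ≠ a)).head? = some a := by
  intro l
  induction l with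
  | nil => simp
  | cons b r ih =>
    intro h
    by_cases hb : b = a
    · subst hb; simp [List.dropWhile_cons]
    · rw [List.dropWhile_cons]
      simp only [ne_eq, hb, not_false_iff, decide_true, if_true]
      exact ih (by rcases List.mem_cons.mp h with h | h; exact absurd h.symm hb; exact h)

private lemma eraseLoops_spec' : ∀ (l : List α),
    (eraseLoops' l).head? = l.head? ∧ (eraseLoops' l).getLast? = l.getLast? ∧
    (eraseLoops' l).Nodup ∧
    List.Sublist ((eraseLoops' l).zip (eraseLoops' l).tail) (l.zip l.tail) := by
  intro l
  induction l with
  | nil => simp [eraseLoops']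
  | cons a l ih =>
    obtain ⟨ih1, ih2, ih3, ih4⟩ := ih
    by_cases hm : a ∈ eraseLoops' l
    · have hd : eraseLoops' (a :: l) = (eraseLoops' l).dropWhile (· ≠ a) := by
        simp [eraseLoops', hm]
      have hne : l ≠ [] := by
        rintro rfl; simp [eraseLoops'] at hm
      have hsuf : List.IsSuffix ((eraseLoops' l).dropWhile (· ≠ a)) (eraseLoops' l) :=
        List.dropWhile_suffix _
      have hh : (eraseLoops' (a :: l)).head? = some a := by
        rw [hd]; exact head?_dropWhile_ne' a _ hm
      refine ⟨by rw [hh]; simp, ?_, ?_, ?_⟩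
      · obtain ⟨u, hu⟩ := hsuf
        have hne2 : (eraseLoops' l).dropWhile (· ≠ a) ≠ [] := by
          intro h0; rw [hd, h0] at hh; simp at hh
        have h1 : (u ++ (eraseLoops' l).dropWhile (· ≠ a)).getLast?
            = ((eraseLoops' l).dropWhile (· ≠ a)).getLast? := by
          rw [List.getLast?_append, List.getLast?_eq_getLast hne2, Option.some_or]
        rw [hd, ← h1, hu, ih2, getLast?_cons_ne' a hne]
      · rw [hd]; exact (List.dropWhile_sublist _).nodup ih3
      · rw [hd]
        exact ((edges_suffix' (List.dropWhile_suffix _)).trans ih4).trans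
          (by simpa using edges_sublist_cons' a l)
    · have hd : eraseLoops' (a :: l) = a :: eraseLoops' l := by
        simp [eraseLoops', hm]
      have hnil : (eraseLoops' l = []) ↔ (l = []) := by
        constructor
        · intro h; rw [h] at ih1; exact List.head?_eq_none_iff.mp ih1.symm
        · rintro rfl; simp [eraseLoops']
      refine ⟨by rw [hd]; simpa using ih1, ?_, ?_, ?_⟩
      · rcases eq_or_ne l [] with rfl | hne
        · rw [hd, hnil.mpr rfl]
        · have hne' : eraseLoops' l ≠ [] := fun h => hne (hnil.mp h)
          rw [hd, getLast?_cons_ne' a hne', ih2, getLast?_cons_ne' a hne]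
      · rw [hd]; exact List.nodup_cons.mpr ⟨hm, ih3⟩
      · rw [hd]
        rcases eq_or_ne l [] with rfl | hne
        · rw [hnil.mpr rfl]
        · have hne' : eraseLoops' l ≠ [] := fun h => hne (hnil.mp h)
          obtain ⟨b, m, hbm⟩ := List.exists_cons_of_ne_nil hne'
          obtain ⟨c, m', hcm⟩ := List.exists_cons_of_ne_nil hne
          have hbc : b = c := by
            rw [hbm, hcm] at ih1; simpa using ih1
          subst hbc
          rw [hbm, hcm]
          simp only [List.zip_cons_cons, List.tail_cons]
          rw [hbm, hcm] at ih4
          simp only [List.tail_cons] at ih4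
          exact List.Sublist.cons₂ _ ih4

end ListHelpers

private lemma sum_split' {ι : Type*} (s : Finset ι) (f g h k : ι → ℝ)
    (H : ∀ i ∈ s, k i = f i - 2 * g i + h i) :
    ∑ i ∈ s, k i = (∑ i ∈ s, f i) - 2*(∑ i ∈ s, g i) + (∑ i ∈ s, h i) := by
  rw [Finset.mul_sum, ← Finset.sum_sub_distrib, ← Finset.sum_add_distrib]
  exact Finset.sum_congr rfl H

private lemma path_cs' {n : ℕ} (P : Matrix (Fin n) (Fin n) ℝ) (π : Fin n → ℝ)
    (hπpos : ∀ i, 0 < π i) (hnonneg : ∀ i j, 0 ≤ P i j) (v : Fin n → ℝ)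
    (l : List (Fin n)) (s t : Fin n)
    (hhead : l.head? = some s) (hlast : l.getLast? = some t)
    (hpos : ∀ e ∈ l.zip l.tail, 0 < P e.1 e.2) :
    (v t - v s)^2 ≤ pathWeight P π l *
      (∑ e : Fin n × Fin n,
        if e ∈ l.zip l.tail then π e.1 * P e.1 e.2 * (v e.2 - v e.1)^2 else 0) := by
  obtain ⟨h1, h2, h3, h4⟩ := eraseLoops_spec' l
  set l' := eraseLoops' l with hl'
  set E' := l'.zip l'.tail with hE'
  have hEnodup : E'.Nodup := zip_nodup' _ _ h3
  set F := E'.toFinset with hF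
  have hmemE : ∀ e ∈ F, e ∈ l.zip l.tail := by
    intro e he
    exact h4.subset (List.mem_toFinset.mp he)
  have hQpos : ∀ e ∈ F, 0 < π e.1 * P e.1 e.2 := fun e he =>
    mul_pos (hπpos _) (hpos e (hmemE e he))
  set Q : Fin n × Fin n → ℝ := fun e => π e.1 * P e.1 e.2 with hQ
  set d : Fin n × Fin n → ℝ := fun e => v e.2 - v e.1 with hd
  have htel : v t - v s = ∑ e ∈ F, d e := by
    rw [List.sum_toFinset _ hEnodup]
    exact (tele' v l' s t (by rw [h1, hhead]) (by rw [h2, hlast])).symm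
  have hcs : (∑ e ∈ F, d e)^2 ≤ (∑ e ∈ F, 1 / Q e) * (∑ e ∈ F, Q e * d e ^ 2) := by
    have := Finset.sum_mul_sq_le_sq_mul_sq F (fun e => Real.sqrt (Q e)⁻¹)
      (fun e => Real.sqrt (Q e) * d e)
    calc (∑ e ∈ F, d e)^2
        = (∑ e ∈ F, Real.sqrt (Q e)⁻¹ * (Real.sqrt (Q e) * d e))^2 := by
          congr 1
          refine Finset.sum_congr rfl fun e he => ?_
          rw [← mul_assoc, ← Real.sqrt_mul (inv_nonneg.mpr (hQpos e he).le),
            inv_mul_cancel₀ (hQpos e he).ne', Real.sqrt_one, one_mul]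
      _ ≤ (∑ e ∈ F, Real.sqrt (Q e)⁻¹ ^ 2) * (∑ e ∈ F, (Real.sqrt (Q e) * d e)^2) := this
      _ = (∑ e ∈ F, 1 / Q e) * (∑ e ∈ F, Q e * d e ^ 2) := by
          congr 1
          · refine Finset.sum_congr rfl fun e he => ?_
            rw [Real.sq_sqrt (inv_nonneg.mpr (hQpos e he).le), one_div]
          · refine Finset.sum_congr rfl fun e he => ?_
            rw [mul_pow, Real.sq_sqrt (hQpos e he).le]
  have hW : (∑ e ∈ F, 1 / Q e) ≤ pathWeight P π l := by
    rw [List.sum_toFinset _ hEnodup]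
    exact List.Sublist.sum_le_sum (h4.map _) (by
      intro x hx
      simp only [List.mem_map] at hx
      obtain ⟨e, _, rfl⟩ := hx
      exact div_nonneg zero_le_one (mul_nonneg (hπpos _).le (hnonneg _ _)))
  have hB : (∑ e ∈ F, Q e * d e ^ 2) ≤
      ∑ e : Fin n × Fin n, if e ∈ l.zip l.tail then Q e * d e ^ 2 else 0 := by
    calc (∑ e ∈ F, Q e * d e ^ 2)
        = ∑ e ∈ F, (if e ∈ l.zip l.tail then Q e * d e ^ 2 else 0) := by
          refine Finset.sum_congr rfl fun e he => (if_pos (hmemE e he)).symm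
      _ ≤ _ := by
          refine Finset.sum_le_sum_of_subset_of_nonneg (Finset.subset_univ F) fun e _ _ => ?_
          split
          · exact mul_nonneg (mul_nonneg (hπpos _).le (hnonneg _ _)) (sq_nonneg _)
          · exact le_rfl
  have hBnn : 0 ≤ ∑ e ∈ F, Q e * d e ^ 2 :=
    Finset.sum_nonneg fun e he => mul_nonneg (hQpos e he).le (sq_nonneg _)
  have hWnn : 0 ≤ pathWeight P π l := by
    refine List.sum_nonneg ?_
    intro x hx
    simp only [List.mem_map] at hx
    obtain ⟨e, _, rfl⟩ := hx
    exact div_nonneg zero_le_one (mul_nonneg (hπpos _).le (hnonneg _ _))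
  calc (v t - v s)^2 = (∑ e ∈ F, d e)^2 := by rw [htel]
    _ ≤ (∑ e ∈ F, 1 / Q e) * (∑ e ∈ F, Q e * d e ^ 2) := hcs
    _ ≤ pathWeight P π l *
        (∑ e : Fin n × Fin n, if e ∈ l.zip l.tail then Q e * d e ^ 2 else 0) :=
      mul_le_mul hW hB hBnn hWnn

theorem stmt10 (n : ℕ) (P : Matrix (Fin n) (Fin n) ℝ) (π : Fin n → ℝ)
    (hπpos : ∀ i, 0 < π i) (hπsum : ∑ i, π i = 1)
    (hnonneg : ∀ i j, 0 ≤ P i j) (hrow : ∀ i, ∑ j, P i j = 1)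
    (hrev : ∀ i j, π i * P i j = π j * P j i)
    (hirr : ∀ i j, ∃ k : ℕ, 0 < (P ^ k) i j)
    (γ : Fin n → Fin n → List (Fin n))
    (hhead : ∀ s t, (γ s t).head? = some s)
    (hlast : ∀ s t, (γ s t).getLast? = some t)
    (hchain : ∀ s t, (γ s t).Chain' (fun u v => 0 < P u v))
    (κ : ℝ) (hκ : 0 < κ)
    (hκdef : ∀ e : Fin n × Fin n,
      (∑ s, ∑ t, (if e ∈ (γ s t).zip (γ s t).tail
          then pathWeight P π (γ s t) * π s * π t else 0)) ≤ κ) :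
    ∀ (μ : ℝ) (v : Fin n → ℝ), v ≠ 0 → P *ᵥ v = μ • v →
      (∑ i, π i * v i = 0) → μ ≤ 1 - 1 / κ := by
  intro μ v hv heig hmean
  set S := ∑ i, π i * v i ^ 2 with hSdef
  have hS : 0 < S := by
    obtain ⟨i, hi⟩ := Function.ne_iff.mp hv
    refine Finset.sum_pos' (fun i _ => mul_nonneg (hπpos i).le (sq_nonneg _)) ?_
    exact ⟨i, Finset.mem_univ i, mul_pos (hπpos i) (by
      have : v i ≠ 0 := hi
      positivity)⟩
  have heig' : ∀ i, ∑ j, P i j * v j = μ * v i := by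
    intro i
    have := congrFun heig i
    simpa [Matrix.mulVec, dotProduct] using this
  -- Variance identity
  have hinnerVar : ∀ s, (∑ t, π s * π t * (v t - v s)^2) = π s * S + π s * v s^2 := by
    intro s
    rw [sum_split' Finset.univ (fun t => π s * (π t * v t^2))
      (fun t => (π s * v s)*(π t * v t)) (fun t => π t * (π s * v s^2))
      (fun t => π s * π t * (v t - v s)^2) (fun t _ => by ring)]
    rw [← Finset.mul_sum, ← Finset.mul_sum, ← Finset.sum_mul, hπsum, hmean]
    ring
  have hVar : (∑ s, ∑ t, π s * π t * (v t - v s)^2) = 2 * S := by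
    rw [Finset.sum_congr rfl fun s _ => hinnerVar s, Finset.sum_add_distrib,
      ← Finset.sum_mul, hπsum]
    simp only [one_mul]
    ring
  -- Dirichlet identity
  have hinnerDir : ∀ i, (∑ j, π i * P i j * (v i - v j)^2)
      = π i * v i^2 - 2*((π i * v i) * (μ * v i)) + ∑ j, π i * P i j * v j^2 := by
    intro i
    rw [sum_split' Finset.univ (fun j => (π i * v i^2) * P i j)
      (fun j => (π i * v i) * (P i j * v j)) (fun j => π i * P i j * v j^2)
      (fun j => π i * P i j * (v i - v j)^2) (fun j _ => by ring)]
    rw [← Finset.mul_sum, ← Finset.mul_sum, hrow, heig', mul_one]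
  have hT3 : (∑ i, ∑ j, π i * P i j * v j^2) = S := by
    rw [Finset.sum_congr rfl fun i _ => Finset.sum_congr rfl fun j _ => by rw [hrev i j]]
    rw [Finset.sum_comm]
    refine Finset.sum_congr rfl fun j _ => ?_
    calc ∑ i, π j * P j i * v j ^ 2 = ∑ i, (π j * v j^2) * P j i :=
          Finset.sum_congr rfl fun i _ => by ring
      _ = π j * v j^2 := by rw [← Finset.mul_sum, hrow, mul_one]
  have hDir : (∑ i, ∑ j, π i * P i j * (v i - v j)^2) = 2*(1-μ)*S := by
    rw [sum_split' Finset.univ (fun i => π i * v i^2) (fun i => (π i * v i) * (μ * v i))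
      (fun i => ∑ j, π i * P i j * v j^2)
      (fun i => ∑ j, π i * P i j * (v i - v j)^2) (fun i _ => hinnerDir i)]
    rw [hT3]
    have : (∑ i, (π i * v i) * (μ * v i)) = μ * S := by
      rw [Finset.mul_sum]
      exact Finset.sum_congr rfl fun i _ => by ring
    rw [this]
    ring
  -- Per-pair bound
  set Q : Fin n × Fin n → ℝ := fun e => π e.1 * P e.1 e.2 with hQ
  set d : Fin n × Fin n → ℝ := fun e => v e.2 - v e.1 with hd
  have hpair : ∀ s t : Fin n, π s * π t * (v t - v s)^2
      ≤ ∑ e : Fin n × Fin n, (if e ∈ (γ s t).zip (γ s t).tail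
          then pathWeight P π (γ s t) * π s * π t * (Q e * d e ^ 2) else 0) := by
    intro s t
    have hcs := path_cs' P π hπpos hnonneg v (γ s t) s t (hhead s t) (hlast s t)
      (fun e he => chain'_of_mem_zip' (hchain s t) he)
    have hππ : 0 ≤ π s * π t := mul_nonneg (hπpos s).le (hπpos t).le
    calc π s * π t * (v t - v s)^2
        ≤ π s * π t * (pathWeight P π (γ s t) *
            (∑ e : Fin n × Fin n, if e ∈ (γ s t).zip (γ s t).tail
              then π e.1 * P e.1 e.2 * (v e.2 - v e.1)^2 else 0)) :=
          mul_le_mul_of_nonneg_left hcs hππ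
      _ = ∑ e : Fin n × Fin n, (if e ∈ (γ s t).zip (γ s t).tail
            then pathWeight P π (γ s t) * π s * π t * (Q e * d e ^ 2) else 0) := by
          rw [Finset.mul_sum, Finset.mul_sum]
          refine Finset.sum_congr rfl fun e _ => ?_
          split <;> ring
  -- Summation and conclusion
  have hedge : (∑ e : Fin n × Fin n, Q e * d e ^ 2) = 2*(1-μ)*S := by
    rw [Fintype.sum_prod_type]
    rw [← hDir]
    refine Finset.sum_congr rfl fun i _ => Finset.sum_congr rfl fun j _ => ?_
    show π i * P i j * (v j - v i)^2 = π i * P i j * (v i - v j)^2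
    ring
  have hmain : 2 * S ≤ κ * (2*(1-μ)*S) := by
    calc 2 * S = ∑ s, ∑ t, π s * π t * (v t - v s)^2 := hVar.symm
      _ ≤ ∑ s, ∑ t, ∑ e : Fin n × Fin n, (if e ∈ (γ s t).zip (γ s t).tail
            then pathWeight P π (γ s t) * π s * π t * (Q e * d e ^ 2) else 0) :=
          Finset.sum_le_sum fun s _ => Finset.sum_le_sum fun t _ => hpair s t
      _ = ∑ e : Fin n × Fin n, ∑ s, ∑ t, (if e ∈ (γ s t).zip (γ s t).tail
            then pathWeight P π (γ s t) * π s * π t * (Q e * d e ^ 2) else 0) := by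
          rw [Finset.sum_congr rfl fun s _ => Finset.sum_comm]
          exact Finset.sum_comm
      _ = ∑ e : Fin n × Fin n, (Q e * d e ^ 2) * ∑ s, ∑ t,
            (if e ∈ (γ s t).zip (γ s t).tail
              then pathWeight P π (γ s t) * π s * π t else 0) := by
          refine Finset.sum_congr rfl fun e _ => ?_
          rw [Finset.mul_sum]
          refine Finset.sum_congr rfl fun s _ => ?_
          rw [Finset.mul_sum]
          refine Finset.sum_congr rfl fun t _ => ?_
          split <;> ring
      _ ≤ ∑ e : Fin n × Fin n, (Q e * d e ^ 2) * κ := by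
          refine Finset.sum_le_sum fun e _ => ?_
          refine mul_le_mul_of_nonneg_left (hκdef e) ?_
          exact mul_nonneg (mul_nonneg (hπpos _).le (hnonneg _ _)) (sq_nonneg _)
      _ = κ * (2*(1-μ)*S) := by
          rw [← Finset.sum_mul, hedge]; ring
  have h2S : 0 < 2 * S := by linarith
  have h1 : 1 ≤ κ * (1 - μ) := by
    have : (1:ℝ) * (2*S) ≤ (κ * (1 - μ)) * (2*S) := by nlinarith
    exact le_of_mul_le_mul_right (by linarith [this]) h2S
  have h2 : 1 / κ ≤ 1 - μ := by
    rw [div_le_iff₀ hκ]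
    linarith
  linarith
end
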